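/- Suppose a measurable function φ_s on ℝ³ satisfies ‖φ_s‖_{L²} ≤ C₀ and ‖φ_s‖_{L^∞} ≤ C₀ (1+s)^{−3/2} for all s ≥ 0, where 0 < γ < 3/2. Then for every x ∈ ℝ³ and s ≥ 0, ∫ |x−y|^{−2γ} |φ_s(y)|² dy ≤ C (1+s)^{−2γ} for a constant C depending only on C₀ and γ. -/

import Mathlib

open MeasureTheory Real Set Metric
open scoped ENNReal NNReal

noncomputable abbrev E3 := EuclideanSpace ℝ (Fin 3)

lemma lint_polar (g : ℝ → ℝ≥0∞) (hg : Measurable g) :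
    ∫⁻ x : E3, g ‖x‖ =
      (volume : Measure E3).toSphere Set.univ *
        ∫⁻ r in Set.Ioi (0:ℝ), ENNReal.ofReal (r ^ 2) * g r := by
  have hdim : Module.finrank ℝ E3 = 3 := by simp [finrank_euclideanSpace]
  have h0 : (∫⁻ x : E3, g ‖x‖) = ∫⁻ x in ({(0:E3)}ᶜ : Set E3), g ‖x‖ := by
    rw [restrict_compl_singleton]
  rw [h0, ← lintegral_subtype_comap (measurableSet_singleton (0:E3)).compl]
  have hmp := Measure.measurePreserving_homeomorphUnitSphereProd (volume : Measure E3)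
  have hemb := (homeomorphUnitSphereProd E3).measurableEmbedding
  have h1 := hmp.lintegral_comp_emb hemb (fun p => g p.2)
  simp only [homeomorphUnitSphereProd_apply_snd_coe] at h1
  rw [h1, MeasureTheory.lintegral_prod _ (by fun_prop)]
  simp only [Prod.snd]
  rw [lintegral_const, mul_comm]
  congr 1
  rw [hdim]
  show (∫⁻ r : Set.Ioi (0:ℝ), g ↑r ∂Measure.volumeIoiPow 2) = _
  rw [Measure.volumeIoiPow,
    lintegral_withDensity_eq_lintegral_mul _
      (by fun_prop : Measurable (fun r : Set.Ioi (0:ℝ) => ENNReal.ofReal (r.1 ^ 2)))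
      (by fun_prop : Measurable fun r : Set.Ioi (0:ℝ) => g ↑r)]
  rw [← lintegral_subtype_comap measurableSet_Ioi (fun r => ENNReal.ofReal (r ^ 2) * g r)]
  rfl

lemma kernel_ball (γ R : ℝ) (hγ0 : 0 < γ) (hγ : 2*γ < 3) (hR : 0 < R) :
    ∫⁻ y in Metric.ball (0 : E3) R, ENNReal.ofReal (‖y‖ ^ (-(2*γ)))
      ≤ ENNReal.ofReal
        ((3 * (volume (Metric.ball (0:E3) 1)).toReal / (3 - 2*γ)) * R ^ (3 - 2*γ)) := by
  set g : ℝ → ℝ≥0∞ :=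
    fun r => Set.indicator (Set.Ioo 0 R) (fun r => ENNReal.ofReal (r ^ (-(2*γ)))) r with hg
  have hgm : Measurable g := by
    apply Measurable.indicator _ measurableSet_Ioo
    fun_prop
  have hpt : ∀ y : E3, y ∈ Metric.ball (0:E3) R →
      ENNReal.ofReal (‖y‖ ^ (-(2*γ))) = g ‖y‖ := by
    intro y hy
    have h2γ : -(2*γ) ≠ 0 := by
      have : (0:ℝ) < 2*γ := by linarith
      exact neg_ne_zero.mpr this.ne'
    rcases eq_or_ne y 0 with rfl | hy0
    · simp only [hg, norm_zero]
      rw [Real.zero_rpow h2γ,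
        Set.indicator_of_notMem (by simp : (0:ℝ) ∉ Set.Ioo (0:ℝ) R)]
      simp
    · simp only [hg]
      have hmem : ‖y‖ ∈ Set.Ioo (0:ℝ) R := ⟨norm_pos_iff.mpr hy0, by simpa using hy⟩
      rw [Set.indicator_of_mem hmem]
  calc ∫⁻ y in Metric.ball (0 : E3) R, ENNReal.ofReal (‖y‖ ^ (-(2*γ)))
      = ∫⁻ y in Metric.ball (0 : E3) R, g ‖y‖ :=
        setLIntegral_congr_fun measurableSet_ball hpt
    _ ≤ ∫⁻ y : E3, g ‖y‖ := setLIntegral_le_lintegral _ _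
    _ = (volume : Measure E3).toSphere Set.univ *
        ∫⁻ r in Set.Ioi (0:ℝ), ENNReal.ofReal (r ^ 2) * g r := lint_polar g hgm
    _ ≤ _ := by
        have h2 : ∫⁻ r in Set.Ioi (0:ℝ), ENNReal.ofReal (r ^ 2) * g r
            = ENNReal.ofReal (R ^ (3 - 2*γ) / (3 - 2*γ)) := by
          have hind : ∀ r : ℝ, ENNReal.ofReal (r ^ 2) * g r =
              Set.indicator (Set.Ioo 0 R) (fun r => ENNReal.ofReal (r ^ (3 - 2*γ - 1))) r := by
            intro r
            rcases em (r ∈ Set.Ioo (0:ℝ) R) with hr | hr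
            · rw [hg]
              simp only [Set.indicator_of_mem hr]
              rw [← ENNReal.ofReal_mul (by positivity)]
              congr 1
              rw [← Real.rpow_natCast r 2, ← Real.rpow_add hr.1]
              norm_num
              ring_nf
            · simp [hg, Set.indicator_of_notMem hr]
          simp_rw [hind]
          rw [lintegral_indicator measurableSet_Ioo, Measure.restrict_restrict measurableSet_Ioo,
            Set.inter_eq_self_of_subset_left (Set.Ioo_subset_Ioi_self)]
          have hInt : IntegrableOn (fun r : ℝ => r ^ (3 - 2*γ - 1)) (Set.Ioo 0 R) := by
            have := (intervalIntegral.intervalIntegrable_rpow'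
              (by linarith : (-1:ℝ) < 3 - 2*γ - 1) (a := 0) (b := R)).1
            exact this.mono_set Set.Ioo_subset_Ioc_self
          rw [← ofReal_integral_eq_lintegral_ofReal hInt]
          · congr 1
            rw [Measure.restrict_congr_set Ioo_ae_eq_Ioc,
              ← intervalIntegral.integral_of_le hR.le,
              integral_rpow (Or.inl (by linarith : (-1:ℝ) < 3 - 2*γ - 1))]
            rw [Real.zero_rpow (by intro h; nlinarith [h] : 3 - 2*γ - 1 + 1 ≠ 0)]
            norm_num
          · filter_upwards [ae_restrict_mem measurableSet_Ioo] with r hr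
            exact Real.rpow_nonneg hr.1.le _
        rw [h2, Measure.toSphere_apply_univ]
        have hdim : Module.finrank ℝ E3 = 3 := by simp [finrank_euclideanSpace]
        rw [hdim]
        have h3 : ((3:ℕ):ℝ≥0∞) * volume (Metric.ball (0:E3) 1)
            = ENNReal.ofReal (3 * (volume (Metric.ball (0:E3) 1)).toReal) := by
          rw [ENNReal.ofReal_mul (by norm_num : (0:ℝ) ≤ 3),
            ENNReal.ofReal_toReal measure_ball_lt_top.ne]
          norm_num
        rw [h3, ← ENNReal.ofReal_mul (by positivity)]
        apply ENNReal.ofReal_le_ofReal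
        apply le_of_eq
        field_simp

lemma kernel_translate (p R : ℝ) (x : E3) :
    ∫⁻ y in Metric.ball x R, ENNReal.ofReal (‖x - y‖ ^ p)
      = ∫⁻ y in Metric.ball (0 : E3) R, ENNReal.ofReal (‖y‖ ^ p) := by
  have hemb : MeasurableEmbedding (fun y : E3 => x - y) := by
    have : (fun y : E3 => x - y) = (fun z : E3 => x + z) ∘ (fun y : E3 => -y) := by
      funext y; simp [sub_eq_add_neg]
    rw [this]
    exact (measurableEmbedding_addLeft x).comp (MeasurableEquiv.neg E3).measurableEmbedding
  have hmp : MeasurePreserving (fun y : E3 => x - y) volume volume :=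
    Measure.measurePreserving_sub_left volume x
  have h := hmp.lintegral_comp_emb hemb
    (fun z => Set.indicator (Metric.ball (0:E3) R) (fun z => ENNReal.ofReal (‖z‖ ^ p)) z)
  rw [← lintegral_indicator measurableSet_ball, ← lintegral_indicator measurableSet_ball, ← h]
  apply lintegral_congr
  intro y
  rcases em (y ∈ Metric.ball x R) with hy | hy
  · rw [Set.indicator_of_mem hy, Set.indicator_of_mem]
    simp only [mem_ball, dist_zero_right] at *
    rwa [dist_comm, ← dist_eq_norm] at *
  · rw [Set.indicator_of_notMem hy, Set.indicator_of_notMem]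
    simp only [mem_ball, dist_zero_right, not_lt] at *
    rwa [dist_comm, ← dist_eq_norm] at *

theorem stmt2 (C₀ γ : ℝ) (hC₀ : 0 < C₀) (hγ0 : 0 < γ) (hγ : γ < 3/2) :
    ∃ C > (0:ℝ), ∀ φ : ℝ → EuclideanSpace ℝ (Fin 3) → ℂ,
      (∀ s : ℝ, 0 ≤ s → eLpNorm (φ s) 2 volume ≤ ENNReal.ofReal C₀) →
      (∀ s : ℝ, 0 ≤ s →
        eLpNorm (φ s) ⊤ volume ≤ ENNReal.ofReal (C₀ * (1+s) ^ (-(3:ℝ)/2))) →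
      ∀ (x : EuclideanSpace ℝ (Fin 3)) (s : ℝ), 0 ≤ s →
        (∫ y, ‖x - y‖ ^ (-(2*γ)) * ‖φ s y‖ ^ 2) ≤ C * (1+s) ^ (-(2*γ)) := by
  have h32 : (0:ℝ) < 3 - 2*γ := by linarith
  set T : ℝ := (volume (Metric.ball (0:E3) 1)).toReal with hTdef
  have hT : 0 ≤ T := ENNReal.toReal_nonneg
  set κ : ℝ := 3 * T / (3 - 2*γ) with hκdef
  have hκ : 0 ≤ κ := by positivity
  refine ⟨C₀^2 * (κ + 1), by positivity, ?_⟩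
  intro φ hL2 hLinf x s hs
  have hR0 : (0:ℝ) < 1 + s := by linarith
  have hRexp : (0:ℝ) < (1+s) ^ (-(2*γ)) := Real.rpow_pos_of_pos hR0 _
  by_cases hint : Integrable (fun y => ‖x - y‖ ^ (-(2*γ)) * ‖φ s y‖ ^ 2) volume
  case neg =>
    rw [integral_undef hint]
    positivity
  rw [integral_eq_lintegral_of_nonneg_ae
    (Filter.Eventually.of_forall fun y => by positivity) hint.aestronglyMeasurable]
  apply ENNReal.toReal_le_of_le_ofReal (by positivity)
  set M : ℝ := C₀ * (1+s) ^ (-(3:ℝ)/2) with hMdef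
  have hM0 : 0 < M := by positivity
  have hae : ∀ᵐ y : E3 ∂volume, ‖φ s y‖ ≤ M := by
    have h := hLinf s hs
    rw [eLpNorm_exponent_top] at h
    filter_upwards [ae_le_eLpNormEssSup (f := φ s) (μ := volume)] with y hy
    have h2 : (‖φ s y‖₊ : ℝ≥0∞) ≤ ENNReal.ofReal M := le_trans hy h
    rw [← enorm_eq_nnnorm, ← ofReal_norm] at h2
    exact (ENNReal.ofReal_le_ofReal_iff hM0.le).mp h2
  have hA : ∫⁻ y in Metric.ball x (1+s),
      ENNReal.ofReal (‖x - y‖ ^ (-(2*γ)) * ‖φ s y‖ ^ 2)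
      ≤ ENNReal.ofReal (C₀^2 * κ * (1+s) ^ (-(2*γ))) := by
    have step1 : ∀ᵐ y ∂(volume.restrict (Metric.ball x (1+s))),
        ENNReal.ofReal (‖x - y‖ ^ (-(2*γ)) * ‖φ s y‖ ^ 2)
          ≤ ENNReal.ofReal (M^2) * ENNReal.ofReal (‖x - y‖ ^ (-(2*γ))) := by
      apply ae_restrict_of_ae
      filter_upwards [hae] with y hy
      rw [← ENNReal.ofReal_mul (by positivity)]
      apply ENNReal.ofReal_le_ofReal
      calc ‖x - y‖ ^ (-(2*γ)) * ‖φ s y‖ ^ 2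
          ≤ ‖x - y‖ ^ (-(2*γ)) * M^2 := by
            apply mul_le_mul_of_nonneg_left _ (Real.rpow_nonneg (norm_nonneg _) _)
            exact pow_le_pow_left₀ (norm_nonneg _) hy 2
        _ = M^2 * ‖x - y‖ ^ (-(2*γ)) := mul_comm _ _
    calc ∫⁻ y in Metric.ball x (1+s),
          ENNReal.ofReal (‖x - y‖ ^ (-(2*γ)) * ‖φ s y‖ ^ 2)
        ≤ ∫⁻ y in Metric.ball x (1+s),
            ENNReal.ofReal (M^2) * ENNReal.ofReal (‖x - y‖ ^ (-(2*γ))) :=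
          lintegral_mono_ae step1
      _ = ENNReal.ofReal (M^2) *
            ∫⁻ y in Metric.ball x (1+s), ENNReal.ofReal (‖x - y‖ ^ (-(2*γ))) :=
          lintegral_const_mul' _ _ ENNReal.ofReal_ne_top
      _ = ENNReal.ofReal (M^2) *
            ∫⁻ y in Metric.ball (0:E3) (1+s), ENNReal.ofReal (‖y‖ ^ (-(2*γ))) := by
          rw [kernel_translate]
      _ ≤ ENNReal.ofReal (M^2) * ENNReal.ofReal (κ * (1+s) ^ (3 - 2*γ)) := by
          apply mul_le_mul_right
          exact kernel_ball γ (1+s) hγ0 (by linarith) hR0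
      _ = ENNReal.ofReal (C₀^2 * κ * (1+s) ^ (-(2*γ))) := by
          rw [← ENNReal.ofReal_mul (by positivity)]
          congr 1
          have e1 : M^2 = C₀^2 * (1+s) ^ (-(3:ℝ)) := by
            rw [hMdef, mul_pow]
            congr 1
            rw [← Real.rpow_natCast ((1+s) ^ (-(3:ℝ)/2)) 2, ← Real.rpow_mul hR0.le]
            norm_num
          have e2 : (1+s) ^ (-(3:ℝ)) * (1+s) ^ (3 - 2*γ) = (1+s) ^ (-(2*γ)) := by
            rw [← Real.rpow_add hR0]
            congr 1
            ring
          rw [e1, show C₀^2 * (1+s) ^ (-(3:ℝ)) * (κ * (1+s) ^ (3 - 2*γ))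
            = C₀^2 * κ * ((1+s) ^ (-(3:ℝ)) * (1+s) ^ (3 - 2*γ)) from by ring, e2]
  have hL2' : ∫⁻ y : E3, ENNReal.ofReal (‖φ s y‖^2) ≤ ENNReal.ofReal (C₀^2) := by
    have h := hL2 s hs
    rw [eLpNorm_eq_lintegral_rpow_enorm_toReal two_ne_zero ENNReal.ofNat_ne_top] at h
    have htr : ((2:ℝ≥0∞)).toReal = (2:ℝ) := by norm_num
    rw [htr] at h
    calc ∫⁻ y : E3, ENNReal.ofReal (‖φ s y‖^2)
        = ∫⁻ y : E3, (‖φ s y‖₊ : ℝ≥0∞) ^ (2:ℝ) := by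
          apply lintegral_congr
          intro y
          rw [← enorm_eq_nnnorm, ← ofReal_norm,
            ENNReal.ofReal_rpow_of_nonneg (norm_nonneg _) (by norm_num)]
          congr 1
          rw [← Real.rpow_natCast ‖φ s y‖ 2]
          norm_num
      _ = ((∫⁻ y : E3, (‖φ s y‖₊:ℝ≥0∞) ^ (2:ℝ)) ^ ((1:ℝ)/2)) ^ (2:ℝ) := by
          rw [← ENNReal.rpow_mul]
          norm_num
      _ ≤ (ENNReal.ofReal C₀) ^ (2:ℝ) := ENNReal.rpow_le_rpow h (by norm_num)
      _ = ENNReal.ofReal (C₀^2) := by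
          rw [ENNReal.ofReal_rpow_of_nonneg hC₀.le (by norm_num)]
          congr 1
          rw [← Real.rpow_natCast C₀ 2]
          norm_num
  have hB : ∫⁻ y in (Metric.ball x (1+s))ᶜ,
      ENNReal.ofReal (‖x - y‖ ^ (-(2*γ)) * ‖φ s y‖ ^ 2)
      ≤ ENNReal.ofReal (C₀^2 * (1+s) ^ (-(2*γ))) := by
    have step1 : ∀ᵐ y ∂(volume.restrict (Metric.ball x (1+s))ᶜ),
        ENNReal.ofReal (‖x - y‖ ^ (-(2*γ)) * ‖φ s y‖ ^ 2)
          ≤ ENNReal.ofReal ((1+s) ^ (-(2*γ))) * ENNReal.ofReal (‖φ s y‖^2) := by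
      filter_upwards [ae_restrict_mem measurableSet_ball.compl] with y hy
      rw [← ENNReal.ofReal_mul (by positivity)]
      apply ENNReal.ofReal_le_ofReal
      apply mul_le_mul_of_nonneg_right _ (sq_nonneg _)
      have hdist : (1+s) ≤ ‖x - y‖ := by
        simp only [Set.mem_compl_iff, Metric.mem_ball, not_lt] at hy
        rw [← dist_eq_norm, dist_comm]
        exact hy
      exact Real.rpow_le_rpow_of_nonpos hR0 hdist (by linarith)
    calc ∫⁻ y in (Metric.ball x (1+s))ᶜ,
          ENNReal.ofReal (‖x - y‖ ^ (-(2*γ)) * ‖φ s y‖ ^ 2)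
        ≤ ∫⁻ y in (Metric.ball x (1+s))ᶜ,
            ENNReal.ofReal ((1+s) ^ (-(2*γ))) * ENNReal.ofReal (‖φ s y‖^2) :=
          lintegral_mono_ae step1
      _ = ENNReal.ofReal ((1+s) ^ (-(2*γ))) *
            ∫⁻ y in (Metric.ball x (1+s))ᶜ, ENNReal.ofReal (‖φ s y‖^2) :=
          lintegral_const_mul' _ _ ENNReal.ofReal_ne_top
      _ ≤ ENNReal.ofReal ((1+s) ^ (-(2*γ))) * ∫⁻ y : E3, ENNReal.ofReal (‖φ s y‖^2) :=
          mul_le_mul_right (setLIntegral_le_lintegral _ _) _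
      _ ≤ ENNReal.ofReal ((1+s) ^ (-(2*γ))) * ENNReal.ofReal (C₀^2) :=
          mul_le_mul_right hL2' _
      _ = ENNReal.ofReal (C₀^2 * (1+s) ^ (-(2*γ))) := by
          rw [← ENNReal.ofReal_mul hRexp.le]
          congr 1
          ring
  calc ∫⁻ y : E3, ENNReal.ofReal (‖x - y‖ ^ (-(2*γ)) * ‖φ s y‖ ^ 2)
      = (∫⁻ y in Metric.ball x (1+s),
          ENNReal.ofReal (‖x - y‖ ^ (-(2*γ)) * ‖φ s y‖ ^ 2)) +
        ∫⁻ y in (Metric.ball x (1+s))ᶜ,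
          ENNReal.ofReal (‖x - y‖ ^ (-(2*γ)) * ‖φ s y‖ ^ 2) :=
        (lintegral_add_compl _ measurableSet_ball).symm
    _ ≤ ENNReal.ofReal (C₀^2 * κ * (1+s) ^ (-(2*γ))) +
        ENNReal.ofReal (C₀^2 * (1+s) ^ (-(2*γ))) := add_le_add hA hB
    _ = ENNReal.ofReal (C₀^2 * (κ + 1) * (1+s) ^ (-(2*γ))) := by
        rw [← ENNReal.ofReal_add (by positivity) (by positivity)]
        congr 1
        ring
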